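/- Both eigenvalues of the 2×2 matrix σ_0 = [[-1/2, Δt/12], [-1/Δt, 0]] have absolute value exactly 1/(2√3) < 1, independent of Δt > 0. -/

import Mathlib

/-- Both eigenvalues of the `2×2` matrix `σ₀ = [[-1/2, Δt/12], [-1/Δt, 0]]`
have absolute value exactly `1/(2√3) < 1`, independently of `Δt > 0`. -/
theorem stmt8 (Δt : ℝ) (hΔt : 0 < Δt) :
    (∀ μ ∈ spectrum ℂ (!![(-1/2 : ℂ), (Δt : ℂ)/12; -1/(Δt : ℂ), 0]),
      ‖μ‖ = 1 / (2 * Real.sqrt 3)) ∧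
    1 / (2 * Real.sqrt 3) < 1 := by
  have hs3 : (0:ℝ) < Real.sqrt 3 := Real.sqrt_pos.mpr (by norm_num)
  have hs3sq : (Real.sqrt 3) ^ 2 = 3 := Real.sq_sqrt (by norm_num)
  constructor
  · intro μ hμ
    rw [spectrum.mem_iff] at hμ
    rw [Matrix.isUnit_iff_isUnit_det, isUnit_iff_ne_zero, not_ne_iff] at hμ
    have hΔ : (Δt : ℂ) ≠ 0 := by exact_mod_cast ne_of_gt hΔt
    have hquad : μ ^ 2 + μ / 2 + 1 / 12 = 0 := by
      rw [Matrix.det_fin_two] at hμ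
      simp [Matrix.algebraMap_matrix_apply] at hμ
      field_simp at hμ
      have h2 : (Δt:ℂ) * (μ^2*24 + μ*12 + 2) = 0 := by linear_combination (Δt:ℂ) * hμ
      have h3 := (mul_eq_zero.mp h2).resolve_left hΔ
      linear_combination h3 / 24
    set s : ℝ := Real.sqrt 3 with hs
    have hsC : ((s:ℂ))^2 = 3 := by exact_mod_cast hs3sq
    have hI : Complex.I ^ 2 = -1 := Complex.I_sq
    have hfac : (μ - (-1/4 + Complex.I * s / 12)) * (μ - (-1/4 - Complex.I * s / 12)) = 0 := by
      linear_combination hquad - ((s:ℂ)^2/144) * hI + (1/144 : ℂ) * hsC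
    have key : ∀ (ε : ℝ), ε = 1 ∨ ε = -1 →
        ‖(-1/4 + (ε:ℂ) * Complex.I * s / 12)‖ = 1 / (2 * s) := by
      intro ε hε
      have hmk : (-1/4 + (ε:ℂ) * Complex.I * s / 12) = Complex.mk (-1/4) (ε * s / 12) := by
        apply Complex.ext <;> simp
      rw [hmk, Complex.norm_def, Complex.normSq_mk]
      have hε2 : ε^2 = 1 := by rcases hε with h | h <;> simp [h]
      have : (-1/4:ℝ) * (-1/4) + ε * s / 12 * (ε * s / 12) = (1/(2*s))^2 := by
        field_simp
        linear_combination (576 + 64*(s^2+3)) * hs3sq + 64*s^4*hε2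
      rw [this, Real.sqrt_sq (by positivity)]
    rcases mul_eq_zero.mp hfac with h | h
    · have hμeq : μ = -1/4 + (1:ℝ) * Complex.I * s / 12 := by
        have := sub_eq_zero.mp h; rw [this]; push_cast; ring
      rw [hμeq]; exact key 1 (Or.inl rfl)
    · have hμeq : μ = -1/4 + (-1:ℝ) * Complex.I * s / 12 := by
        have := sub_eq_zero.mp h; rw [this]; push_cast; ring
      rw [hμeq]; exact key (-1) (Or.inr rfl)
  · rw [div_lt_one (by positivity)]
    nlinarith [hs3sq, hs3]
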